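/- Let V be a finite set, f : 2^V → ℝ a non-negative set function, and for each integer j > 0 let ε_j = max{ f(X∖{v}) − f(X) : X ⊆ V, |X| < j, v ∈ V } (and ε_0 = 0). Then for all sets O, X ⊆ V one has f(O ∪ X) ≥ f(O) − |X ∖ O| · ε_{|O ∪ X| + 1}. -/
import Mathlib


/-- For a non-negative set function `f` on a finite set `V` with
monotonicity approximation term `ε`, for all `O, X ⊆ V` we have
`f(O ∪ X) ≥ f(O) − |X ∖ O| · ε_{|O ∪ X| + 1}`. -/
theorem stmt_0 {α : Type*} [DecidableEq α] (V : Finset α) (f : Finset α → ℝ)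
    (hf0 : ∀ X ⊆ V, 0 ≤ f X)
    (ε : ℕ → ℝ) (hε0 : ε 0 = 0)
    (hε : ∀ j : ℕ, 0 < j →
      IsGreatest {r : ℝ | ∃ X ⊆ V, ∃ v ∈ V, X.card < j ∧ r = f (X.erase v) - f X} (ε j)) :
    ∀ O ⊆ V, ∀ X ⊆ V,
      f (O ∪ X) ≥ f O - ((X \ O).card : ℝ) * ε ((O ∪ X).card + 1) := by
  intro O hO X hX
  set j := (O ∪ X).card + 1 with hj
  have key : ∀ D ⊆ X \ O, f (O ∪ D) ≥ f O - (D.card : ℝ) * ε j := by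
    intro D
    induction D using Finset.induction_on with
    | empty => intro _; simp
    | @insert a D ha ih =>
      intro hins
      have hD : D ⊆ X \ O := (Finset.subset_insert a D).trans hins
      have haX : a ∈ X \ O := hins (Finset.mem_insert_self a D)
      have ih' := ih hD
      have hsub : insert a (O ∪ D) ⊆ O ∪ X := by
        intro x hx
        rcases Finset.mem_insert.mp hx with rfl | hx
        · exact Finset.mem_union_right _ (Finset.mem_sdiff.mp haX).1
        · rcases Finset.mem_union.mp hx with h | h
          · exact Finset.mem_union_left _ h
          · exact Finset.mem_union_right _ (Finset.mem_sdiff.mp (hD h)).1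
      have hsubV : insert a (O ∪ D) ⊆ V := hsub.trans (Finset.union_subset hO hX)
      have haV : a ∈ V := hsubV (Finset.mem_insert_self _ _)
      have hcard : (insert a (O ∪ D)).card < j := by
        have := Finset.card_le_card hsub
        omega
      have hna : a ∉ O ∪ D := by
        simp only [Finset.mem_union, not_or]
        exact ⟨(Finset.mem_sdiff.mp haX).2, ha⟩
      have hub := (hε j (by omega)).2
        ⟨insert a (O ∪ D), hsubV, a, haV, hcard, rfl⟩
      rw [Finset.erase_insert hna] at hub
      have heq : O ∪ insert a D = insert a (O ∪ D) := Finset.union_insert a O D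
      rw [heq, Finset.card_insert_of_notMem ha]
      push_cast
      linarith
  have h := key (X \ O) le_rfl
  rwa [Finset.union_sdiff_self_eq_union] at h
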